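/- Fix a countably infinite set Ω and a function f : Ω → ℤ_{≥1} ∪ {∞} whose fiber over ∞ has exactly two elements and such that f⁻¹(n) is infinite for every n ∈ ℤ_{≥1}. Equip the compact group (∏_{v ∈ Ω_fin} (ℤ/ℓ^{f(v)}ℤ)^×) × (∏_{(v,w)} ℤ/ℓ^{f(v,w)}ℤ) — where the second product runs over ordered pairs (v,w) of distinct elements of Ω with v ≠ v_ℓ(1) and w ∉ {v_ℓ(1), v_ℓ(2)} — with its Haar probability measure (each factor discrete, product topology). Then the set of pairs (g, λ) for which the resulting 4-tuple (Ω, f, g, λ) is a Rado decorated graph has measure 1. -/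

import Mathlib

/-!
Statement 8: For fixed `(Ω, f)` (with both infinite fibers conditions), a random
pair `(g, λ)` — chosen according to the Haar probability measure on the compact
parameter group — yields a Rado decorated graph with probability `1`.

Residues mod `ℓ^n` are encoded as natural numbers `< ℓ^n`; an element of
`(ℤ/ℓ^n)^×` is a natural number `< ℓ^n` not divisible by `ℓ`.  The isomorphism
`log_ℓ` is encoded by the function `lg : ℤ_ℓ → ℤ_ℓ`, `lg x = log_ℓ (1 + ℓx)`.
-/

noncomputable section

open scoped Classical ENat

/-- `lg` encodes a (topological) group isomorphism `log_ℓ : 1 + ℓℤ_ℓ ≃ ℤ_ℓ`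
via `lg x = log_ℓ (1 + ℓ x)` (note `(1+ℓx)(1+ℓy) = 1 + ℓ(x + y + ℓxy)`). -/
structure IsLogIso (ℓ : ℕ) [Fact ℓ.Prime] (lg : ℤ_[ℓ] → ℤ_[ℓ]) : Prop where
  bijective : Function.Bijective lg
  map_mul : ∀ x y : ℤ_[ℓ], lg (x + y + (ℓ : ℤ_[ℓ]) * x * y) = lg x + lg y
  continuous : Continuous lg

/-- The value of `log_ℓ (1 + a·ℓ^n) mod ℓ^n`, as a natural number `< ℓ^n`
(for `n ≥ 1`). -/
def logVal (ℓ : ℕ) [Fact ℓ.Prime] (lg : ℤ_[ℓ] → ℤ_[ℓ]) (n : ℕ) (a : ℤ_[ℓ]) : ℕ :=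
  (PadicInt.toZModPow n (lg (a * (ℓ : ℤ_[ℓ]) ^ (n - 1)))).val

/-- The raw data of a decorated graph: a vertex set `Ω`, the function
`f : Ω → ℤ_{≥1} ∪ {∞}`, the two distinguished vertices `v1 = v_ℓ(1)`,
`v2 = v_ℓ(2)`, the decoration `g` and the labeling `lab`. -/
structure GraphData where
  Ω : Type
  f : Ω → ℕ∞
  v1 : Ω
  v2 : Ω
  g : Ω → ℕ
  lab : Ω → Ω → ℕ

namespace GraphData

variable (D : GraphData)

/-- `f(v,w) = min (f v) (f w)`, as a natural number (it is finite on all pairs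
carrying a label). -/
def fm (v w : D.Ω) : ℕ := (min (D.f v) (D.f w)).toNat

/-- The pairs `(v,w)` carrying a label: distinct, not both in the fiber over `∞`. -/
def Rel (v w : D.Ω) : Prop := v ≠ w ∧ ¬ (D.f v = ⊤ ∧ D.f w = ⊤)

/-- `D` is a decorated graph for the odd prime `ℓ` and the logarithm `lg`. -/
def IsDecorated (ℓ : ℕ) [Fact ℓ.Prime] (lg : ℤ_[ℓ] → ℤ_[ℓ]) : Prop :=
  Countable D.Ω ∧ Infinite D.Ω ∧
  (∀ v, 1 ≤ D.f v) ∧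
  D.v1 ≠ D.v2 ∧ D.f D.v1 = ⊤ ∧ D.f D.v2 = ⊤ ∧
  (∀ v, D.f v = ⊤ → v = D.v1 ∨ v = D.v2) ∧
  (∀ v, D.f v ≠ ⊤ → D.g v < ℓ ^ (D.f v).toNat ∧ ¬ ℓ ∣ D.g v) ∧
  (∀ v w, D.Rel v w → D.lab v w < ℓ ^ D.fm v w) ∧
  (∀ w, D.f w ≠ ⊤ → D.lab D.v1 w = logVal ℓ lg (D.f w).toNat (D.g w : ℤ_[ℓ])) ∧
  (∀ w, D.f w ≠ ⊤ → D.lab w D.v1 = 0 ∧ D.lab w D.v2 = 0)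

/-- `D` is Rado. -/
def IsRado (ℓ : ℕ) [Fact ℓ.Prime] (lg : ℤ_[ℓ] → ℤ_[ℓ]) : Prop :=
  ∀ S : Finset D.Ω, D.v1 ∈ S → D.v2 ∈ S →
  ∀ n : ℕ, 1 ≤ n →
  ∀ α : ℕ, α < ℓ ^ n → ¬ ℓ ∣ α →
  ∀ μ₁ μ₂ : D.Ω → ℕ,
    (∀ s ∈ S, μ₁ s < ℓ ^ (min (n : ℕ∞) (D.f s)).toNat) →
    (∀ s ∈ S, μ₂ s < ℓ ^ (min (n : ℕ∞) (D.f s)).toNat) →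
    μ₂ D.v1 = logVal ℓ lg n (α : ℤ_[ℓ]) →
    μ₁ D.v1 = 0 → μ₁ D.v2 = 0 →
    ∃ v : D.Ω, v ∉ S ∧ D.f v = (n : ℕ∞) ∧ D.g v = α ∧
      ∀ s ∈ S, D.lab v s = μ₁ s ∧ D.lab s v = μ₂ s

/-- `D` is weakly Rado. -/
def IsWeaklyRado (ℓ : ℕ) [Fact ℓ.Prime] (lg : ℤ_[ℓ] → ℤ_[ℓ]) : Prop :=
  ∀ S : Finset D.Ω, D.v1 ∈ S → D.v2 ∈ S →
  ∀ n : ℕ, 1 ≤ n →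
  ∀ α : ℕ, α < ℓ ^ n → ¬ ℓ ∣ α →
  ∀ μ₁ μ₂ : D.Ω → ℕ,
    (∀ s ∈ S, μ₁ s < ℓ ^ (min (n : ℕ∞) (D.f s)).toNat) →
    (∀ s ∈ S, μ₂ s < ℓ ^ (min (n : ℕ∞) (D.f s)).toNat) →
    μ₂ D.v1 = logVal ℓ lg n (α : ℤ_[ℓ]) →
    μ₁ D.v1 = 0 → μ₁ D.v2 = 0 →
    ∃ v : D.Ω, v ∉ S ∧ ∃ γ : ℕ, γ < ℓ ^ n ∧ ¬ ℓ ∣ γ ∧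
      D.f v = (n : ℕ∞) ∧ D.g v = α ∧
      ∀ s ∈ S, D.lab v s = (γ * μ₁ s) % ℓ ^ (min (n : ℕ∞) (D.f s)).toNat ∧
        D.lab s v = μ₂ s

/-- The scaling `γ_• · λ` of the labeling of `D`. -/
def scale (ℓ : ℕ) (γ : D.Ω → ℕ) : GraphData where
  Ω := D.Ω
  f := D.f
  v1 := D.v1
  v2 := D.v2
  g := D.g
  lab := fun v w => if D.f v = ⊤ then D.lab v w else (γ v * D.lab v w) % ℓ ^ D.fm v w

/-- `D` is Rado up to scaling: some scaling `γ_• · λ` of its labeling by units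
`γ_v ∈ (ℤ/ℓ^{f v})^×` is Rado. -/
def IsRadoUpToScaling (ℓ : ℕ) [Fact ℓ.Prime] (lg : ℤ_[ℓ] → ℤ_[ℓ]) : Prop :=
  ∃ γ : D.Ω → ℕ, (∀ v, D.f v ≠ ⊤ → γ v < ℓ ^ (D.f v).toNat ∧ ¬ ℓ ∣ γ v) ∧
    (D.scale ℓ γ).IsRado ℓ lg

end GraphData

section Param

variable (ℓ : ℕ) [Fact ℓ.Prime] (lg : ℤ_[ℓ] → ℤ_[ℓ])
variable (Ω : Type) (f : Ω → ℕ∞) (v1 v2 : Ω)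

/-- The compact parameter group of pairs `(g, λ)`: the product of
`∏_{v ∈ Ω_fin} (ℤ/ℓ^{f v})^×` and of `∏_{(v,w)} ℤ/ℓ^{f(v,w)}` over the ordered pairs
`(v,w)` of distinct elements with `v ≠ v_ℓ(1)` and `w ∉ {v_ℓ(1), v_ℓ(2)}`
(each factor discrete, product topology). -/
abbrev Param : Type :=
  ((v : {v : Ω // f v ≠ ⊤}) → (ZMod (ℓ ^ (f v.1).toNat))ˣ) ×
  ((p : {p : Ω × Ω // p.1 ≠ p.2 ∧ p.1 ≠ v1 ∧ p.2 ≠ v1 ∧ p.2 ≠ v2}) →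
    Multiplicative (ZMod (ℓ ^ (min (f p.1.1) (f p.1.2)).toNat)))

/-- The decoration `g` determined by a parameter point. -/
def gOf (x : Param ℓ Ω f v1 v2) (v : Ω) : ℕ :=
  if h : f v ≠ ⊤ then ((x.1 ⟨v, h⟩ : ZMod (ℓ ^ (f v).toNat))).val else 0

/-- The decorated graph determined by a parameter point: the labels not indexed by
the parameter group are the forced ones (`λ(v_ℓ(1), w)` is the prescribed logarithm
and `λ(w, v_ℓ(i)) = 0`). -/
def dataOf (x : Param ℓ Ω f v1 v2) : GraphData where
  Ω := Ω
  f := f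
  v1 := v1
  v2 := v2
  g := gOf ℓ Ω f v1 v2 x
  lab := fun v w =>
    if h : v ≠ w ∧ v ≠ v1 ∧ w ≠ v1 ∧ w ≠ v2 then
      (Multiplicative.toAdd (x.2 ⟨(v, w), h⟩)).val
    else if v = v1 ∧ f w ≠ ⊤ then
      logVal ℓ lg (f w).toNat ((gOf ℓ Ω f v1 v2 x w : ℤ_[ℓ]))
    else 0

end Param

section AuxLemmas

open MeasureTheory

/-- Transport along an equality of indices coming from an injective map is trivial. -/
lemma aux_cast_eq {ι α : Sort*} (F : α → Sort*) {g : ι → α} (hg : Function.Injective g)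
    (z : ∀ i, F (g i)) {j i : ι} (e : g j = g i) :
    cast (congrArg F e) (z j) = z i := by
  obtain rfl : j = i := hg e
  rfl

/-- Every fiber of a surjective homomorphism onto a finite group has Haar measure
`1 / card`. -/
lemma aux_fiber {G H : Type*} [Group G] [TopologicalSpace G] [IsTopologicalGroup G]
    [MeasurableSpace G] [BorelSpace G] [Group H] [Finite H]
    (μ : Measure G) [μ.IsMulLeftInvariant] [IsProbabilityMeasure μ]
    (π : G →* H) (hsurj : Function.Surjective π)
    (hmeas : ∀ h : H, MeasurableSet (π ⁻¹' {h})) (h : H) :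
    μ (π ⁻¹' {h}) = ((Nat.card H : ENNReal))⁻¹ := by
  classical
  letI : Fintype H := Fintype.ofFinite H
  have hdisj : Pairwise (Function.onFun Disjoint fun h' : H => π ⁻¹' {h'}) := by
    intro a b hab
    rw [Function.onFun, Set.disjoint_left]
    intro x hxa hxb
    exact hab ((Set.mem_singleton_iff.mp hxa).symm.trans (Set.mem_singleton_iff.mp hxb))
  have key : ∀ h' : H, μ (π ⁻¹' {h'}) = μ (π ⁻¹' {h}) := by
    intro h'
    obtain ⟨g, hg⟩ := hsurj (h' * h⁻¹)
    have hset : (fun x => g * x) ⁻¹' (π ⁻¹' {h'}) = π ⁻¹' {h} := by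
      ext x
      simp only [Set.mem_preimage, Set.mem_singleton_iff, map_mul, hg]
      constructor
      · intro hx
        have := congrArg (fun t => (h' * h⁻¹)⁻¹ * t) hx
        simpa [mul_assoc] using this
      · intro hx; rw [hx]; group
    rw [← measure_preimage_mul μ g (π ⁻¹' {h'}), hset]
  have hunion : (⋃ h' : H, π ⁻¹' {h'}) = Set.univ := by
    ext x; simp
  have hsum : (Fintype.card H : ENNReal) * μ (π ⁻¹' {h}) = 1 := by
    calc (Fintype.card H : ENNReal) * μ (π ⁻¹' {h})
        = ∑ _h' : H, μ (π ⁻¹' {h}) := by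
          rw [Finset.sum_const, Finset.card_univ, nsmul_eq_mul]
      _ = ∑ h' : H, μ (π ⁻¹' {h'}) := Finset.sum_congr rfl fun h' _ => (key h').symm
      _ = ∑' h' : H, μ (π ⁻¹' {h'}) := (tsum_fintype _).symm
      _ = μ (⋃ h' : H, π ⁻¹' {h'}) := (measure_iUnion hdisj hmeas).symm
      _ = 1 := by rw [hunion, measure_univ]
  haveI : Nonempty H := ⟨1⟩
  have hc0 : ((Fintype.card H : ℕ) : ENNReal) ≠ 0 := by
    simp [Fintype.card_ne_zero]
  have hct : ((Fintype.card H : ℕ) : ENNReal) ≠ ⊤ := ENNReal.natCast_ne_top _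
  have := congrArg (fun t => ((Fintype.card H : ℕ) : ENNReal)⁻¹ * t) hsum
  simp only [← mul_assoc, ENNReal.inv_mul_cancel hc0 hct, one_mul, mul_one] at this
  rw [Nat.card_eq_fintype_card, this]

/-- The measure of the preimage of any subset of a finite group under a surjective
homomorphism. -/
lemma aux_preimage {G H : Type*} [Group G] [TopologicalSpace G] [IsTopologicalGroup G]
    [MeasurableSpace G] [BorelSpace G] [Group H] [Finite H]
    (μ : Measure G) [μ.IsMulLeftInvariant] [IsProbabilityMeasure μ]
    (π : G →* H) (hsurj : Function.Surjective π)
    (hmeas : ∀ h : H, MeasurableSet (π ⁻¹' {h})) (C : Set H) :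
    μ (π ⁻¹' C) = (Nat.card C : ENNReal) * ((Nat.card H : ENNReal))⁻¹ := by
  classical
  letI : Fintype H := Fintype.ofFinite H
  have hdisj : Pairwise (Function.onFun Disjoint fun h : C => π ⁻¹' {(h : H)}) := by
    intro a b hab
    rw [Function.onFun, Set.disjoint_left]
    intro x hxa hxb
    exact hab (Subtype.ext ((Set.mem_singleton_iff.mp hxa).symm.trans
      (Set.mem_singleton_iff.mp hxb)))
  have hun : π ⁻¹' C = ⋃ h : C, π ⁻¹' {(h : H)} := by
    ext x
    simp only [Set.mem_preimage, Set.mem_iUnion, Set.mem_singleton_iff]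
    constructor
    · intro hx; exact ⟨⟨π x, hx⟩, rfl⟩
    · rintro ⟨h, hh⟩; rw [hh]; exact h.2
  rw [hun, measure_iUnion hdisj (fun h => hmeas h), tsum_fintype]
  simp only [aux_fiber μ π hsurj hmeas]
  rw [Finset.sum_const, Finset.card_univ, nsmul_eq_mul, Nat.card_eq_fintype_card,
    Nat.card_eq_fintype_card]

/-- The number of elements different from a given one in a finite type. -/
lemma aux_card_ne {K : Type*} [Finite K] (k : K) :
    Nat.card {z : K // z ≠ k} = Nat.card K - 1 := by
  classical
  letI : Fintype K := Fintype.ofFinite K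
  rw [Nat.card_eq_fintype_card, Nat.card_eq_fintype_card]
  have h : Fintype.card {z : K // ¬ (z = k)} = Fintype.card K - Fintype.card {z : K // z = k} :=
    Fintype.card_subtype_compl _
  rw [Fintype.card_subtype_eq] at h
  exact h

section PiMapDefs

variable (ℓ : ℕ) {Ω : Type} (f : Ω → ℕ∞) (v1 v2 : Ω) (S : Finset Ω)

/-- The finite group of coordinates of the parameter space attached to a candidate
vertex with `f`-value `m`, relative to a finite set `S` containing `v1` and `v2`. -/
abbrev Kt (m : ℕ∞) : Type :=
  (ZMod (ℓ ^ m.toNat))ˣ ×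
  ((s : {s : Ω // s ∈ S ∧ s ≠ v1 ∧ s ≠ v2}) →
    Multiplicative (ZMod (ℓ ^ (min m (f s.1)).toNat))) ×
  ((s : {s : Ω // s ∈ S ∧ s ≠ v1}) →
    Multiplicative (ZMod (ℓ ^ (min (f s.1) m).toNat)))

variable (Ω) in
/-- The projection of the parameter space onto the coordinates attached to a finite
family of candidate vertices outside `S`. -/
def piMap (hv1S : v1 ∈ S) (hv2S : v2 ∈ S) {N : ℕ} (v : Fin N → Ω)
    (hvS : ∀ i, v i ∉ S) (hvf : ∀ i, f (v i) ≠ ⊤) :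
    Param ℓ Ω f v1 v2 →* ((i : Fin N) → Kt ℓ f v1 v2 S (f (v i))) where
  toFun x i :=
    ⟨x.1 ⟨v i, hvf i⟩,
     fun s => x.2 ⟨(v i, s.1), ⟨fun e => hvS i (by rw [show v i = (s.1 : Ω) from e]; exact s.2.1),
       fun e => hvS i (by rw [show v i = v1 from e]; exact hv1S), s.2.2.1, s.2.2.2⟩⟩,
     fun s => x.2 ⟨(s.1, v i), ⟨fun e => hvS i (by rw [← show (s.1 : Ω) = v i from e]; exact s.2.1),
       s.2.2, fun e => hvS i (by rw [show v i = v1 from e]; exact hv1S),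
       fun e => hvS i (by rw [show v i = v2 from e]; exact hv2S)⟩⟩⟩
  map_one' := rfl
  map_mul' _ _ := rfl

lemma piMap_surjective (hv1S : v1 ∈ S) (hv2S : v2 ∈ S) {N : ℕ} (v : Fin N → Ω)
    (hvinj : Function.Injective v) (hvS : ∀ i, v i ∉ S) (hvf : ∀ i, f (v i) ≠ ⊤) :
    Function.Surjective (piMap ℓ Ω f v1 v2 S hv1S hv2S v hvS hvf) := by
  classical
  have hg1 : Function.Injective
      (fun q : Fin N × {s : Ω // s ∈ S ∧ s ≠ v1 ∧ s ≠ v2} => ((v q.1, q.2.1) : Ω × Ω)) := by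
    intro a b hab
    obtain ⟨h1, h2⟩ := Prod.ext_iff.mp hab
    exact Prod.ext (hvinj h1) (Subtype.ext h2)
  have hg2 : Function.Injective
      (fun q : Fin N × {s : Ω // s ∈ S ∧ s ≠ v1} => ((q.2.1, v q.1) : Ω × Ω)) := by
    intro a b hab
    obtain ⟨h1, h2⟩ := Prod.ext_iff.mp hab
    exact Prod.ext (hvinj h2) (Subtype.ext h1)
  intro y
  refine ⟨⟨fun j => if h : ∃ i, v i = j.1 then
        cast (congrArg (fun w => (ZMod (ℓ ^ (f w).toNat))ˣ) h.choose_spec) (y h.choose).1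
      else 1,
      fun p => if h : ∃ q : Fin N × {s : Ω // s ∈ S ∧ s ≠ v1 ∧ s ≠ v2},
          ((v q.1, q.2.1) : Ω × Ω) = p.1 then
        cast (congrArg (fun r : Ω × Ω => Multiplicative (ZMod (ℓ ^ (min (f r.1) (f r.2)).toNat)))
          h.choose_spec) ((y h.choose.1).2.1 h.choose.2)
      else if h : ∃ q : Fin N × {s : Ω // s ∈ S ∧ s ≠ v1},
          ((q.2.1, v q.1) : Ω × Ω) = p.1 then
        cast (congrArg (fun r : Ω × Ω => Multiplicative (ZMod (ℓ ^ (min (f r.1) (f r.2)).toNat)))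
          h.choose_spec) ((y h.choose.1).2.2 h.choose.2)
      else 1⟩, ?_⟩
  funext i
  refine Prod.ext ?_ (Prod.ext ?_ ?_)
  · show (if h : ∃ i', v i' = v i then
        cast (congrArg (fun w => (ZMod (ℓ ^ (f w).toNat))ˣ) h.choose_spec) (y h.choose).1
      else 1) = (y i).1
    have hc : ∃ i', v i' = v i := ⟨i, rfl⟩
    rw [dif_pos hc]
    exact aux_cast_eq (fun w => (ZMod (ℓ ^ (f w).toNat))ˣ) hvinj (fun i' => (y i').1)
      hc.choose_spec
  · funext s
    show (if h : ∃ q : Fin N × {s : Ω // s ∈ S ∧ s ≠ v1 ∧ s ≠ v2},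
          ((v q.1, q.2.1) : Ω × Ω) = (v i, s.1) then
        cast (congrArg (fun r : Ω × Ω => Multiplicative (ZMod (ℓ ^ (min (f r.1) (f r.2)).toNat)))
          h.choose_spec) ((y h.choose.1).2.1 h.choose.2)
      else if h : ∃ q : Fin N × {s : Ω // s ∈ S ∧ s ≠ v1},
          ((q.2.1, v q.1) : Ω × Ω) = (v i, s.1) then
        cast (congrArg (fun r : Ω × Ω => Multiplicative (ZMod (ℓ ^ (min (f r.1) (f r.2)).toNat)))
          h.choose_spec) ((y h.choose.1).2.2 h.choose.2)
      else 1) = (y i).2.1 s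
    have hc : ∃ q : Fin N × {s : Ω // s ∈ S ∧ s ≠ v1 ∧ s ≠ v2},
        ((v q.1, q.2.1) : Ω × Ω) = (v i, s.1) := ⟨(i, s), rfl⟩
    rw [dif_pos hc]
    exact aux_cast_eq (fun r : Ω × Ω => Multiplicative (ZMod (ℓ ^ (min (f r.1) (f r.2)).toNat)))
      hg1 (fun q => (y q.1).2.1 q.2) (i := (i, s)) hc.choose_spec
  · funext s
    show (if h : ∃ q : Fin N × {s : Ω // s ∈ S ∧ s ≠ v1 ∧ s ≠ v2},
          ((v q.1, q.2.1) : Ω × Ω) = (s.1, v i) then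
        cast (congrArg (fun r : Ω × Ω => Multiplicative (ZMod (ℓ ^ (min (f r.1) (f r.2)).toNat)))
          h.choose_spec) ((y h.choose.1).2.1 h.choose.2)
      else if h : ∃ q : Fin N × {s : Ω // s ∈ S ∧ s ≠ v1},
          ((q.2.1, v q.1) : Ω × Ω) = (s.1, v i) then
        cast (congrArg (fun r : Ω × Ω => Multiplicative (ZMod (ℓ ^ (min (f r.1) (f r.2)).toNat)))
          h.choose_spec) ((y h.choose.1).2.2 h.choose.2)
      else 1) = (y i).2.2 s
    have hc : ∃ q : Fin N × {s : Ω // s ∈ S ∧ s ≠ v1},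
        ((q.2.1, v q.1) : Ω × Ω) = (s.1, v i) := ⟨(i, s), rfl⟩
    rw [dif_neg, dif_pos hc]
    · exact aux_cast_eq
        (fun r : Ω × Ω => Multiplicative (ZMod (ℓ ^ (min (f r.1) (f r.2)).toNat)))
        hg2 (fun q => (y q.1).2.2 q.2) (i := (i, s)) hc.choose_spec
    · rintro ⟨q, hq⟩
      exact hvS q.1 (by rw [show v q.1 = (s.1 : Ω) from (Prod.ext_iff.mp hq).1]; exact s.2.1)

lemma piMap_fiber_measurable (hv1S : v1 ∈ S) (hv2S : v2 ∈ S) {N : ℕ} (v : Fin N → Ω)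
    (hvS : ∀ i, v i ∉ S) (hvf : ∀ i, f (v i) ≠ ⊤)
    [MeasurableSpace (Param ℓ Ω f v1 v2)] [BorelSpace (Param ℓ Ω f v1 v2)]
    (h : (i : Fin N) → Kt ℓ f v1 v2 S (f (v i))) :
    MeasurableSet (piMap ℓ Ω f v1 v2 S hv1S hv2S v hvS hvf ⁻¹' {h}) := by
  haveI : Finite {s : Ω // s ∈ S ∧ s ≠ v1 ∧ s ≠ v2} :=
    (S.finite_toSet.subset fun s hs => hs.1).to_subtype
  haveI : Finite {s : Ω // s ∈ S ∧ s ≠ v1} :=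
    (S.finite_toSet.subset fun s hs => hs.1).to_subtype
  have heq : piMap ℓ Ω f v1 v2 S hv1S hv2S v hvS hvf ⁻¹' {h} =
      ⋂ i : Fin N, (((fun x : Param ℓ Ω f v1 v2 => x.1 ⟨v i, hvf i⟩) ⁻¹' {(h i).1}) ∩
        ((⋂ s : {s : Ω // s ∈ S ∧ s ≠ v1 ∧ s ≠ v2},
            (fun x : Param ℓ Ω f v1 v2 => x.2 ⟨(v i, s.1), ⟨fun e => hvS i (by rw [show v i = (s.1 : Ω) from e]; exact s.2.1),
              fun e => hvS i (by rw [show v i = v1 from e]; exact hv1S), s.2.2.1, s.2.2.2⟩⟩) ⁻¹' {(h i).2.1 s}) ∩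
         (⋂ s : {s : Ω // s ∈ S ∧ s ≠ v1},
            (fun x : Param ℓ Ω f v1 v2 => x.2 ⟨(s.1, v i), ⟨fun e => hvS i (by rw [← show (s.1 : Ω) = v i from e]; exact s.2.1),
              s.2.2, fun e => hvS i (by rw [show v i = v1 from e]; exact hv1S),
              fun e => hvS i (by rw [show v i = v2 from e]; exact hv2S)⟩⟩) ⁻¹' {(h i).2.2 s}))) := by
    ext x
    simp only [Set.mem_preimage, Set.mem_singleton_iff, Set.mem_iInter, Set.mem_inter_iff,
      funext_iff, Prod.ext_iff, piMap, MonoidHom.coe_mk, OneHom.coe_mk]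
  rw [heq]
  refine MeasurableSet.iInter fun i => MeasurableSet.inter ?_ (MeasurableSet.inter ?_ ?_)
  · exact (isClosed_singleton.preimage ((continuous_apply _).comp continuous_fst)).measurableSet
  · exact MeasurableSet.iInter fun s =>
      (isClosed_singleton.preimage ((continuous_apply _).comp continuous_snd)).measurableSet
  · exact MeasurableSet.iInter fun s =>
      (isClosed_singleton.preimage ((continuous_apply _).comp continuous_snd)).measurableSet

end PiMapDefs

end AuxLemmas


theorem statement8 (ℓ : ℕ) [Fact ℓ.Prime] (hodd : Odd ℓ)
    (lg : ℤ_[ℓ] → ℤ_[ℓ]) (hlg : IsLogIso ℓ lg)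
    (Ω : Type) (f : Ω → ℕ∞) (v1 v2 : Ω)
    (hcount : Countable Ω) (hinf : Infinite Ω)
    (hf1 : ∀ v, 1 ≤ f v) (hne : v1 ≠ v2) (hfv1 : f v1 = ⊤) (hfv2 : f v2 = ⊤)
    (htop : ∀ v, f v = ⊤ → v = v1 ∨ v = v2)
    (hfib : ∀ n : ℕ, 1 ≤ n → {v : Ω | f v = (n : ℕ∞)}.Infinite)
    [MeasurableSpace (Param ℓ Ω f v1 v2)] [BorelSpace (Param ℓ Ω f v1 v2)]
    (μ : MeasureTheory.Measure (Param ℓ Ω f v1 v2))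
    (hμ : μ.IsHaarMeasure) (hprob : MeasureTheory.IsProbabilityMeasure μ) :
    μ {x : Param ℓ Ω f v1 v2 |
        (dataOf ℓ lg Ω f v1 v2 x).IsDecorated ℓ lg ∧
        (dataOf ℓ lg Ω f v1 v2 x).IsRado ℓ lg} = 1 := by
  classical
  haveI := hcount
  haveI := hinf
  haveI := hμ
  have hp : ℓ.Prime := Fact.out
  -- vertices with finite label are different from v1, v2
  have hne1 : ∀ {w : Ω}, f w ≠ ⊤ → w ≠ v1 := fun hw e => hw (by rw [e]; exact hfv1)
  have hne2 : ∀ {w : Ω}, f w ≠ ⊤ → w ≠ v2 := fun hw e => hw (by rw [e]; exact hfv2)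
  have htne : ∀ {w : Ω} {m : ℕ}, f w = (m : ℕ∞) → f w ≠ ⊤ := by
    intro w m hm
    rw [hm]
    exact (ENat.coe_ne_top m)
  have htoNat : ∀ {w : Ω} {m : ℕ}, f w = (m : ℕ∞) → (f w).toNat = m := by
    intro w m hm; rw [hm]; simp
  have hpos : ∀ {w : Ω}, f w ≠ ⊤ → (f w).toNat ≠ 0 := by
    intro w hw h0
    rcases (ENat.toNat_eq_zero).mp h0 with h | h
    · have := hf1 w; rw [h] at this; simp at this
    · exact hw h
  -- every parameter point gives a decorated graph
  have hdec : ∀ x, (dataOf ℓ lg Ω f v1 v2 x).IsDecorated ℓ lg := by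
    intro x
    refine ⟨hcount, hinf, hf1, hne, hfv1, hfv2, htop, ?_, ?_, ?_, ?_⟩
    · intro v hv
      have hv' : f v ≠ ⊤ := hv
      have h1 : (dataOf ℓ lg Ω f v1 v2 x).g v = ((x.1 ⟨v, hv'⟩ : ZMod (ℓ ^ (f v).toNat))).val := by
        show (if h : f v ≠ ⊤ then ((x.1 ⟨v, h⟩ : ZMod (ℓ ^ (f v).toNat))).val else 0) = _
        exact dif_pos hv'
      rw [h1]
      refine ⟨ZMod.val_lt _, ?_⟩
      intro hdvd
      have hco := ZMod.val_coe_unit_coprime (x.1 ⟨v, hv'⟩)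
      have h2 : ℓ ∣ ℓ ^ (f v).toNat := dvd_pow_self ℓ (hpos hv')
      have h3 : ℓ ∣ 1 := hco ▸ Nat.dvd_gcd hdvd h2
      exact hp.ne_one (Nat.dvd_one.mp h3)
    · intro v w hrel
      show (if h : v ≠ w ∧ v ≠ v1 ∧ w ≠ v1 ∧ w ≠ v2 then
          (Multiplicative.toAdd (x.2 ⟨(v, w), h⟩)).val
        else if v = v1 ∧ f w ≠ ⊤ then
          logVal ℓ lg (f w).toNat ((gOf ℓ Ω f v1 v2 x w : ℤ_[ℓ]))
        else 0) < ℓ ^ (dataOf ℓ lg Ω f v1 v2 x).fm v w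
      split_ifs with h1 h2
      · exact ZMod.val_lt _
      · obtain ⟨hv, hw⟩ := h2
        have hfm : (dataOf ℓ lg Ω f v1 v2 x).fm v w = (f w).toNat := by
          show (min (f v) (f w)).toNat = _
          rw [hv, hfv1, min_eq_right le_top]
        rw [hfm]
        exact ZMod.val_lt _
      · exact pow_pos hp.pos _
    · intro w hw
      show (if h : v1 ≠ w ∧ v1 ≠ v1 ∧ w ≠ v1 ∧ w ≠ v2 then
          (Multiplicative.toAdd (x.2 ⟨(v1, w), h⟩)).val
        else if v1 = v1 ∧ f w ≠ ⊤ then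
          logVal ℓ lg (f w).toNat ((gOf ℓ Ω f v1 v2 x w : ℤ_[ℓ]))
        else 0) = logVal ℓ lg (f w).toNat (((dataOf ℓ lg Ω f v1 v2 x).g w : ℤ_[ℓ]))
      rw [dif_neg (fun h => h.2.1 rfl), if_pos ⟨rfl, hw⟩]
      rfl
    · intro w hw
      constructor
      · show (if h : w ≠ v1 ∧ w ≠ v1 ∧ v1 ≠ v1 ∧ v1 ≠ v2 then
            (Multiplicative.toAdd (x.2 ⟨(w, v1), h⟩)).val
          else if w = v1 ∧ f v1 ≠ ⊤ then
            logVal ℓ lg (f v1).toNat ((gOf ℓ Ω f v1 v2 x v1 : ℤ_[ℓ]))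
          else 0) = 0
        rw [dif_neg (fun h => h.2.2.1 rfl), if_neg (fun h => hne1 hw h.1)]
      · show (if h : w ≠ v2 ∧ w ≠ v1 ∧ v2 ≠ v1 ∧ v2 ≠ v2 then
            (Multiplicative.toAdd (x.2 ⟨(w, v2), h⟩)).val
          else if w = v1 ∧ f v2 ≠ ⊤ then
            logVal ℓ lg (f v2).toNat ((gOf ℓ Ω f v1 v2 x v2 : ℤ_[ℓ]))
          else 0) = 0
        rw [dif_neg (fun h => h.2.2.2 rfl), if_neg (fun h => hne1 hw h.1)]
  -- unfolding of labels
  have hlabdef : ∀ (x : Param ℓ Ω f v1 v2) (a b : Ω), (dataOf ℓ lg Ω f v1 v2 x).lab a b =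
      (if h : a ≠ b ∧ a ≠ v1 ∧ b ≠ v1 ∧ b ≠ v2 then
        (Multiplicative.toAdd (x.2 ⟨(a, b), h⟩)).val
      else if a = v1 ∧ f b ≠ ⊤ then
        logVal ℓ lg (f b).toNat ((gOf ℓ Ω f v1 v2 x b : ℤ_[ℓ]))
      else 0) := fun x a b => rfl
  -- the key quantitative lemma
  have key : ∀ (S : Finset Ω) (n α : ℕ) (μ₁ μ₂ : Ω → ℕ),
      v1 ∈ S → v2 ∈ S → 1 ≤ n → α < ℓ ^ n → ¬ ℓ ∣ α →
      (∀ s ∈ S, μ₁ s < ℓ ^ (min (n : ℕ∞) (f s)).toNat) →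
      (∀ s ∈ S, μ₂ s < ℓ ^ (min (n : ℕ∞) (f s)).toNat) →
      μ₂ v1 = logVal ℓ lg n (α : ℤ_[ℓ]) → μ₁ v1 = 0 → μ₁ v2 = 0 →
      μ {x : Param ℓ Ω f v1 v2 | ¬ ∃ w, w ∉ S ∧ f w = (n : ℕ∞) ∧
          (dataOf ℓ lg Ω f v1 v2 x).g w = α ∧
          ∀ s ∈ S, (dataOf ℓ lg Ω f v1 v2 x).lab w s = μ₁ s ∧
            (dataOf ℓ lg Ω f v1 v2 x).lab s w = μ₂ s} = 0 := by
    intro S n α μ₁ μ₂ hS1 hS2 hn hα1 hα2 hb1 hb2 he1 he2 he3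
    haveI hfin1 : Finite {s : Ω // s ∈ S ∧ s ≠ v1 ∧ s ≠ v2} :=
      (S.finite_toSet.subset fun s hs => hs.1).to_subtype
    haveI hfin2 : Finite {s : Ω // s ∈ S ∧ s ≠ v1} :=
      (S.finite_toSet.subset fun s hs => hs.1).to_subtype
    set BadS : Set (Param ℓ Ω f v1 v2) := {x : Param ℓ Ω f v1 v2 | ¬ ∃ w, w ∉ S ∧
        f w = (n : ℕ∞) ∧ (dataOf ℓ lg Ω f v1 v2 x).g w = α ∧
        ∀ s ∈ S, (dataOf ℓ lg Ω f v1 v2 x).lab w s = μ₁ s ∧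
          (dataOf ℓ lg Ω f v1 v2 x).lab s w = μ₂ s} with hBadS
    set T : ℕ := Nat.card (Kt ℓ f v1 v2 S (n : ℕ∞)) with hTdef
    haveI : Nonempty (Kt ℓ f v1 v2 S (n : ℕ∞)) := ⟨1⟩
    have hT1 : 0 < T := Nat.card_pos
    set r : ENNReal := ((T - 1 : ℕ) : ENNReal) / ((T : ℕ) : ENNReal) with hrdef
    have hr : r < 1 := by
      rw [hrdef, ENNReal.div_lt_iff (Or.inl (by exact_mod_cast hT1.ne'))
        (Or.inl (ENNReal.natCast_ne_top T)), one_mul]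
      exact_mod_cast Nat.sub_lt hT1 one_pos
    have hbound : ∀ N : ℕ, μ BadS ≤ r ^ N := by
      intro N
      obtain ⟨v, hvinj, hvf, hvS⟩ : ∃ v : Fin N → Ω, Function.Injective v ∧
          (∀ i, f (v i) = (n : ℕ∞)) ∧ (∀ i, v i ∉ S) := by
        have hinf' : ({w : Ω | f w = (n : ℕ∞)} \ ↑S).Infinite :=
          (hfib n hn).diff S.finite_toSet
        let e : ℕ ↪ ↥({w : Ω | f w = (n : ℕ∞)} \ ↑S) :=
          Set.Infinite.natEmbedding _ hinf'
        refine ⟨fun i => (e i.val).1,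
          fun i j hij => Fin.val_injective (e.injective (Subtype.ext hij)),
          fun i => (e i.val).2.1,
          fun i => fun hw => (e i.val).2.2 (Finset.mem_coe.mpr hw)⟩
      have hvft : ∀ i, f (v i) ≠ ⊤ := fun i => htne (hvf i)
      set π := piMap ℓ Ω f v1 v2 S hS1 hS2 v hvS hvft with hπ
      have hco : ∀ m : ℕ, Nat.Coprime α (ℓ ^ m) :=
        fun m => Nat.Coprime.pow_right _
          (Nat.coprime_comm.mp ((Nat.Prime.coprime_iff_not_dvd hp).mpr hα2))
      set k : (i : Fin N) → Kt ℓ f v1 v2 S (f (v i)) := fun i =>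
        ⟨ZMod.unitOfCoprime α (hco _),
         fun s => Multiplicative.ofAdd ((μ₁ s.1 : ZMod (ℓ ^ (min (f (v i)) (f s.1)).toNat))),
         fun s => Multiplicative.ofAdd ((μ₂ s.1 : ZMod (ℓ ^ (min (f s.1) (f (v i))).toNat)))⟩
        with hk
      set C : Set ((i : Fin N) → Kt ℓ f v1 v2 S (f (v i))) := {y | ∀ i, y i ≠ k i} with hC
      have hincl : BadS ⊆ π ⁻¹' C := by
        intro x hx
        simp only [Set.mem_preimage, hC, Set.mem_setOf_eq]
        intro i hyi
        simp only [hBadS, Set.mem_setOf_eq] at hx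
        apply hx
        have h1 : x.1 ⟨v i, hvft i⟩ = ZMod.unitOfCoprime α (hco ((f (v i)).toNat)) :=
          congrArg (fun t => t.1) hyi
        have h2 : ∀ s : {s : Ω // s ∈ S ∧ s ≠ v1 ∧ s ≠ v2},
            x.2 ⟨(v i, s.1), ⟨fun e => hvS i (by rw [show v i = (s.1 : Ω) from e]; exact s.2.1),
              fun e => hvS i (by rw [show v i = v1 from e]; exact hS1), s.2.2.1, s.2.2.2⟩⟩ =
            Multiplicative.ofAdd ((μ₁ s.1 : ZMod (ℓ ^ (min (f (v i)) (f s.1)).toNat))) :=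
          fun s => congrFun (congrArg (fun t => t.2.1) hyi) s
        have h3 : ∀ s : {s : Ω // s ∈ S ∧ s ≠ v1},
            x.2 ⟨(s.1, v i), ⟨fun e => hvS i (by rw [← show (s.1 : Ω) = v i from e]; exact s.2.1),
              s.2.2, fun e => hvS i (by rw [show v i = v1 from e]; exact hS1),
              fun e => hvS i (by rw [show v i = v2 from e]; exact hS2)⟩⟩ =
            Multiplicative.ofAdd ((μ₂ s.1 : ZMod (ℓ ^ (min (f s.1) (f (v i))).toNat))) :=
          fun s => congrFun (congrArg (fun t => t.2.2) hyi) s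
        have hmn : (f (v i)).toNat = n := htoNat (hvf i)
        have hgv : gOf ℓ Ω f v1 v2 x (v i) = α := by
          rw [gOf, dif_pos (hvft i), h1, ZMod.coe_unitOfCoprime, ZMod.val_natCast, hmn]
          exact Nat.mod_eq_of_lt hα1
        have hvine1 : v i ≠ v1 := hne1 (hvft i)
        have hvine2 : v i ≠ v2 := hne2 (hvft i)
        refine ⟨v i, hvS i, hvf i, hgv, ?_⟩
        intro s hsS
        have hvine : v i ≠ s := fun e => hvS i (by rw [e]; exact hsS)
        by_cases hs1 : s = v1
        · subst hs1
          constructor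
          · rw [hlabdef, dif_neg (fun h => h.2.2.1 rfl), if_neg (fun h => hvine1 h.1)]
            exact he2.symm
          · rw [hlabdef, dif_neg (fun h => h.2.1 rfl), if_pos ⟨rfl, hvft i⟩, hgv, hmn]
            exact he1.symm
        refine ⟨?_, ?_⟩
        · by_cases hs2 : s = v2
          · rw [hlabdef, dif_neg (fun h => h.2.2.2 hs2), if_neg (fun h => hvine1 h.1), hs2]
            exact he3.symm
          · have pf : v i ≠ s ∧ v i ≠ v1 ∧ s ≠ v1 ∧ s ≠ v2 := ⟨hvine, hvine1, hs1, hs2⟩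
            rw [hlabdef, dif_pos pf]
            rw [show x.2 ⟨(v i, s), pf⟩ = Multiplicative.ofAdd
              ((μ₁ s : ZMod (ℓ ^ (min (f (v i)) (f s)).toNat))) from h2 ⟨s, hsS, hs1, hs2⟩]
            rw [toAdd_ofAdd, ZMod.val_natCast]
            have hmin : (min (f (v i)) (f s)).toNat = (min ((n : ℕ∞)) (f s)).toNat := by
              rw [hvf i]
            rw [hmin]
            exact Nat.mod_eq_of_lt (hb1 s hsS)
        · have pf : s ≠ v i ∧ s ≠ v1 ∧ v i ≠ v1 ∧ v i ≠ v2 :=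
            ⟨Ne.symm hvine, hs1, hvine1, hvine2⟩
          rw [hlabdef, dif_pos pf]
          rw [show x.2 ⟨(s, v i), pf⟩ = Multiplicative.ofAdd
            ((μ₂ s : ZMod (ℓ ^ (min (f s) (f (v i))).toNat))) from h3 ⟨s, hsS, hs1⟩]
          rw [toAdd_ofAdd, ZMod.val_natCast]
          have hmin : (min (f s) (f (v i))).toNat = (min ((n : ℕ∞)) (f s)).toNat := by
            rw [hvf i, min_comm]
          rw [hmin]
          exact Nat.mod_eq_of_lt (hb2 s hsS)
      have hmeas : ∀ h, MeasurableSet (π ⁻¹' {h}) :=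
        fun h => piMap_fiber_measurable ℓ f v1 v2 S hS1 hS2 v hvS hvft h
      have hsurj := piMap_surjective ℓ f v1 v2 S hS1 hS2 v hvinj hvS hvft
      have hcardK : ∀ i, Nat.card (Kt ℓ f v1 v2 S (f (v i))) = T := fun i => by rw [hvf i]
      have hH : Nat.card ((i : Fin N) → Kt ℓ f v1 v2 S (f (v i))) = T ^ N := by
        rw [Nat.card_pi, Finset.prod_congr rfl (fun i _ => hcardK i), Finset.prod_const,
          Finset.card_univ, Fintype.card_fin]
      have hCc : Nat.card C = (T - 1) ^ N := by
        have e : C ≃ ((i : Fin N) → {z : Kt ℓ f v1 v2 S (f (v i)) // z ≠ k i}) :=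
          { toFun := fun y i => ⟨y.1 i, y.2 i⟩
            invFun := fun z => ⟨fun i => (z i).1, fun i => (z i).2⟩
            left_inv := fun y => rfl
            right_inv := fun z => rfl }
        rw [Nat.card_congr e, Nat.card_pi]
        have hsub : ∀ i, Nat.card {z : Kt ℓ f v1 v2 S (f (v i)) // z ≠ k i} = T - 1 := by
          intro i
          rw [aux_card_ne, hcardK i]
        rw [Finset.prod_congr rfl (fun i _ => hsub i), Finset.prod_const,
          Finset.card_univ, Fintype.card_fin]
      calc μ BadS ≤ μ (π ⁻¹' C) := MeasureTheory.measure_mono hincl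
        _ = (Nat.card C : ENNReal) *
            ((Nat.card ((i : Fin N) → Kt ℓ f v1 v2 S (f (v i))) : ℕ) : ENNReal)⁻¹ :=
          aux_preimage μ π hsurj hmeas C
        _ = r ^ N := by
          rw [hCc, hH, Nat.cast_pow, Nat.cast_pow, ENNReal.inv_pow, ← mul_pow, hrdef,
            div_eq_mul_inv]
    have h0 := ENNReal.tendsto_pow_atTop_nhds_zero_of_lt_one hr
    exact le_antisymm (ge_of_tendsto' h0 hbound) zero_le
  -- almost surely Rado
  have hnull : μ {x : Param ℓ Ω f v1 v2 | ¬ (dataOf ℓ lg Ω f v1 v2 x).IsRado ℓ lg} = 0 := by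
    set Bset : (Σ S : Finset Ω, (ℕ × ℕ) × ((S → ℕ) × (S → ℕ))) → Set (Param ℓ Ω f v1 v2) :=
      fun q =>
      {x | (v1 ∈ q.1 ∧ v2 ∈ q.1 ∧ 1 ≤ q.2.1.1 ∧ q.2.1.2 < ℓ ^ q.2.1.1 ∧ ¬ ℓ ∣ q.2.1.2 ∧
            (∀ s ∈ q.1, (if h : s ∈ q.1 then q.2.2.1 ⟨s, h⟩ else 0) <
              ℓ ^ (min ((q.2.1.1 : ℕ∞)) (f s)).toNat) ∧
            (∀ s ∈ q.1, (if h : s ∈ q.1 then q.2.2.2 ⟨s, h⟩ else 0) <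
              ℓ ^ (min ((q.2.1.1 : ℕ∞)) (f s)).toNat) ∧
            (if h : v1 ∈ q.1 then q.2.2.2 ⟨v1, h⟩ else 0) =
              logVal ℓ lg q.2.1.1 (q.2.1.2 : ℤ_[ℓ]) ∧
            (if h : v1 ∈ q.1 then q.2.2.1 ⟨v1, h⟩ else 0) = 0 ∧
            (if h : v2 ∈ q.1 then q.2.2.1 ⟨v2, h⟩ else 0) = 0) ∧
           ¬ ∃ w, w ∉ q.1 ∧ f w = (q.2.1.1 : ℕ∞) ∧
             (dataOf ℓ lg Ω f v1 v2 x).g w = q.2.1.2 ∧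
             ∀ s ∈ q.1, (dataOf ℓ lg Ω f v1 v2 x).lab w s =
                 (if h : s ∈ q.1 then q.2.2.1 ⟨s, h⟩ else 0) ∧
               (dataOf ℓ lg Ω f v1 v2 x).lab s w =
                 (if h : s ∈ q.1 then q.2.2.2 ⟨s, h⟩ else 0)} with hBset
    refine MeasureTheory.measure_mono_null ?_
      (MeasureTheory.measure_iUnion_null (s := Bset) fun q => ?_)
    · intro x hx
      by_contra hnotin
      apply hx
      unfold GraphData.IsRado
      intro S hS1 hS2 n hn α hα1 hα2 μ₁ μ₂ hb1 hb2 he1 he2 he3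
      have hS1' : v1 ∈ S := hS1
      have hS2' : v2 ∈ S := hS2
      by_contra hnoex
      apply hnotin
      rw [Set.mem_iUnion]
      refine ⟨⟨S, (n, α), (fun s => μ₁ s.1, fun s => μ₂ s.1)⟩, ?_⟩
      simp only [hBset, Set.mem_setOf_eq]
      refine ⟨⟨hS1', hS2', hn, hα1, hα2, ?_, ?_, ?_, ?_, ?_⟩, ?_⟩
      · intro s hs; rw [dif_pos hs]; exact hb1 s hs
      · intro s hs; rw [dif_pos hs]; exact hb2 s hs
      · exact (dif_pos hS1').trans he1
      · exact (dif_pos hS1').trans he2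
      · exact (dif_pos hS2').trans he3
      · rintro ⟨w, hw1, hw2, hw3, hw4⟩
        apply hnoex
        refine ⟨w, hw1, hw2, hw3, ?_⟩
        intro s hs
        obtain ⟨ha, hb⟩ := hw4 s hs
        replace ha := ha.trans (dif_pos hs); replace hb := hb.trans (dif_pos hs)
        exact ⟨ha, hb⟩
    · obtain ⟨S, ⟨n, α⟩, m₁, m₂⟩ := q
      simp only [hBset]
      by_cases hq : v1 ∈ S ∧ v2 ∈ S ∧ 1 ≤ n ∧ α < ℓ ^ n ∧ ¬ ℓ ∣ α ∧
          (∀ s ∈ S, (if h : s ∈ S then m₁ ⟨s, h⟩ else 0) <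
            ℓ ^ (min ((n : ℕ∞)) (f s)).toNat) ∧
          (∀ s ∈ S, (if h : s ∈ S then m₂ ⟨s, h⟩ else 0) <
            ℓ ^ (min ((n : ℕ∞)) (f s)).toNat) ∧
          (if h : v1 ∈ S then m₂ ⟨v1, h⟩ else 0) = logVal ℓ lg n (α : ℤ_[ℓ]) ∧
          (if h : v1 ∈ S then m₁ ⟨v1, h⟩ else 0) = 0 ∧
          (if h : v2 ∈ S then m₁ ⟨v2, h⟩ else 0) = 0
      · obtain ⟨h1, h2, h3, h4, h5, h6, h7, h8, h9, h10⟩ := hq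
        have hkey := key S n α (fun w => if h : w ∈ S then m₁ ⟨w, h⟩ else 0)
          (fun w => if h : w ∈ S then m₂ ⟨w, h⟩ else 0) h1 h2 h3 h4 h5 h6 h7 h8 h9 h10
        refine MeasureTheory.measure_mono_null ?_ hkey
        intro x hx
        exact hx.2
      · have hempty : ∀ x : Param ℓ Ω f v1 v2, x ∉
            ({x | (v1 ∈ S ∧ v2 ∈ S ∧ 1 ≤ n ∧ α < ℓ ^ n ∧ ¬ ℓ ∣ α ∧
            (∀ s ∈ S, (if h : s ∈ S then m₁ ⟨s, h⟩ else 0) <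
              ℓ ^ (min ((n : ℕ∞)) (f s)).toNat) ∧
            (∀ s ∈ S, (if h : s ∈ S then m₂ ⟨s, h⟩ else 0) <
              ℓ ^ (min ((n : ℕ∞)) (f s)).toNat) ∧
            (if h : v1 ∈ S then m₂ ⟨v1, h⟩ else 0) =
              logVal ℓ lg n (α : ℤ_[ℓ]) ∧
            (if h : v1 ∈ S then m₁ ⟨v1, h⟩ else 0) = 0 ∧
            (if h : v2 ∈ S then m₁ ⟨v2, h⟩ else 0) = 0) ∧
           ¬ ∃ w, w ∉ S ∧ f w = (n : ℕ∞) ∧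
             (dataOf ℓ lg Ω f v1 v2 x).g w = α ∧
             ∀ s ∈ S, (dataOf ℓ lg Ω f v1 v2 x).lab w s =
                 (if h : s ∈ S then m₁ ⟨s, h⟩ else 0) ∧
               (dataOf ℓ lg Ω f v1 v2 x).lab s w =
                 (if h : s ∈ S then m₂ ⟨s, h⟩ else 0)} : Set (Param ℓ Ω f v1 v2)) :=
          fun x hx => hq hx.1
        rw [Set.eq_empty_iff_forall_notMem.mpr hempty]
        exact MeasureTheory.measure_empty
  -- conclusion
  have hfinal : μ {x : Param ℓ Ω f v1 v2 |
      ¬ ((dataOf ℓ lg Ω f v1 v2 x).IsDecorated ℓ lg ∧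
         (dataOf ℓ lg Ω f v1 v2 x).IsRado ℓ lg)} = 0 := by
    refine MeasureTheory.measure_mono_null ?_ hnull
    intro x hx hR
    exact hx ⟨hdec x, hR⟩
  have hle : (1 : ENNReal) ≤ μ {x : Param ℓ Ω f v1 v2 |
      (dataOf ℓ lg Ω f v1 v2 x).IsDecorated ℓ lg ∧
      (dataOf ℓ lg Ω f v1 v2 x).IsRado ℓ lg} := by
    have hcover : (Set.univ : Set (Param ℓ Ω f v1 v2)) ⊆
        {x : Param ℓ Ω f v1 v2 | (dataOf ℓ lg Ω f v1 v2 x).IsDecorated ℓ lg ∧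
          (dataOf ℓ lg Ω f v1 v2 x).IsRado ℓ lg} ∪
        {x : Param ℓ Ω f v1 v2 | ¬ ((dataOf ℓ lg Ω f v1 v2 x).IsDecorated ℓ lg ∧
          (dataOf ℓ lg Ω f v1 v2 x).IsRado ℓ lg)} := by
      intro x _
      by_cases h : (dataOf ℓ lg Ω f v1 v2 x).IsDecorated ℓ lg ∧
        (dataOf ℓ lg Ω f v1 v2 x).IsRado ℓ lg
      · exact Or.inl h
      · exact Or.inr h
    calc (1 : ENNReal) = μ Set.univ := (MeasureTheory.measure_univ).symm
      _ ≤ μ (_ ∪ _) := MeasureTheory.measure_mono hcover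
      _ ≤ _ + _ := MeasureTheory.measure_union_le _ _
      _ = _ := by rw [hfinal, add_zero]
  exact le_antisymm MeasureTheory.prob_le_one hle
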